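/- arXiv:1107.1364 — 6 statements merged into one kernel-verified Lean document; each statement's English description precedes it below -/
import Mathlib

section
/- Let F_q be a finite field with q ≡ 1 mod 3, χ₃ a multiplicative character of order 3 on F_q, and A₀, A₁, A₂ the three cosets of the subgroup of nonzero cubes (A_k = α^k · A₀ for a primitive element α). For β ≠ 0 and i, j ∈ {0,1,2}, the number of ordered pairs (x,y) with x ∈ A_j, y ∈ A_i, x + y = β equals (1/9)·(q − 2 − K − conj(K)) where K = χ₃(β)(ω^{2i} + ω^{2j}) + ω^{2i+j} − ω^{2i+2j}·conj(χ₃(β))·J(χ₃,χ₃), ω is a primitive cube root of unity in ℂ, and J(χ₃,χ₃) = Σ_{c₁+c₂=1} χ₃(c₁)χ₃(c₂) is the Jacobi sum. -/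
open Complex in
theorem stmt_6 (F : Type*) [Field F] [Fintype F]
    (h3 : 3 ∣ Fintype.card F - 1)
    (χ₃ : MulChar F ℂ) (hord : orderOf χ₃ = 3)
    (ω : ℂ) (hω : ω = Complex.exp (2 * Real.pi * Complex.I / 3))
    (hval : ∀ θ : F, θ ≠ 0 → ∃ h : Fin 3, χ₃ θ = ω ^ (h : ℕ))
    (β : F) (hβ : β ≠ 0) (i j : Fin 3)
    (J : ℂ) (hJ : J = ∑ x : F, χ₃ x * χ₃ (1 - x))
    (K : ℂ) (hK : K = χ₃ β * (ω ^ (2 * (i : ℕ)) + ω ^ (2 * (j : ℕ)))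
      + ω ^ (2 * (i : ℕ) + (j : ℕ))
      - ω ^ (2 * (i : ℕ) + 2 * (j : ℕ)) * (starRingEnd ℂ) (χ₃ β) * J) :
    (Nat.card {p : F × F //
        χ₃ p.1 = ω ^ (j : ℕ) ∧ χ₃ p.2 = ω ^ (i : ℕ) ∧ p.1 + p.2 = β} : ℂ) =
      (1 / 9) * ((Fintype.card F : ℂ) - 2 - K - (starRingEnd ℂ) K) := by
  classical
  -- ω facts
  have hω3 : ω ^ 3 = 1 := by
    rw [hω, ← Complex.exp_nat_mul,
      show ((3 : ℕ) : ℂ) * (2 * Real.pi * Complex.I / 3) = 2 * Real.pi * Complex.I by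
        push_cast; ring, Complex.exp_two_pi_mul_I]
  have hω0 : ω ≠ 0 := by rw [hω]; exact Complex.exp_ne_zero _
  have h2piI : (2 * (Real.pi : ℂ) * Complex.I) ≠ 0 := by
    apply mul_ne_zero (mul_ne_zero two_ne_zero _) Complex.I_ne_zero
    exact_mod_cast Real.pi_ne_zero
  have hω1 : ω ≠ 1 := by
    rw [hω]
    intro h
    obtain ⟨n, hn⟩ := Complex.exp_eq_one_iff.mp h
    have h0 : (2 * (Real.pi : ℂ) * Complex.I) * (1 - 3 * n) = 0 := by
      linear_combination (3 : ℂ) * hn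
    rcases mul_eq_zero.mp h0 with h' | h'
    · exact h2piI h'
    · have h1 : ((3 * n : ℤ) : ℂ) = 1 := by push_cast; linear_combination -h'
      have h2 : (3 * n : ℤ) = 1 := by exact_mod_cast h1
      omega
  have hω2 : ω ^ 2 ≠ 1 := by
    intro h
    apply hω1
    calc ω = ω ^ 2 * ω := by rw [h, one_mul]
    _ = ω ^ 3 := by ring
    _ = 1 := hω3
  have hωω2 : ω ≠ ω ^ 2 := by
    intro h
    apply hω1
    have h' : ω * 1 = ω * ω := by rw [mul_one]; rw [sq] at h; exact h
    exact (mul_left_cancel₀ hω0 h').symm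
  have hsumω : ω ^ 2 + ω + 1 = 0 := by
    have hfac : (ω - 1) * (ω ^ 2 + ω + 1) = 0 := by linear_combination hω3
    rcases mul_eq_zero.mp hfac with h' | h'
    · exact absurd (sub_eq_zero.mp h') hω1
    · exact h'
  have hconj : (starRingEnd ℂ) ω = ω ^ 2 := by
    have hz : (starRingEnd ℂ) (2 * (Real.pi : ℂ) * Complex.I / 3)
        = -(2 * (Real.pi : ℂ) * Complex.I / 3) := by
      simp only [map_div₀, map_mul, Complex.conj_I, Complex.conj_ofReal, map_ofNat]
      ring
    have hmul : (starRingEnd ℂ) ω * ω = 1 := by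
      rw [hω, ← Complex.exp_conj, ← Complex.exp_add, hz, neg_add_cancel, Complex.exp_zero]
    have h2 : ω ^ 2 * ω = 1 := by rw [← pow_succ]; exact hω3
    exact mul_right_cancel₀ hω0 (hmul.trans h2.symm)
  -- character facts
  have hχ0 : χ₃ (0 : F) = 0 := MulChar.map_zero χ₃
  have hx3 : ∀ x : F, x ≠ 0 → (χ₃ x) ^ 3 = 1 := by
    intro x hx
    obtain ⟨h, hh⟩ := hval x hx
    rw [hh, ← pow_mul, mul_comm, pow_mul, hω3, one_pow]
  have hconjx : ∀ x : F, (starRingEnd ℂ) (χ₃ x) = (χ₃ x) ^ 2 := by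
    intro x
    by_cases hx : x = 0
    · rw [hx, hχ0]; simp
    · obtain ⟨h, hh⟩ := hval x hx
      rw [hh, map_pow, hconj]; ring
  have hχne1 : χ₃ ≠ 1 := by
    intro h
    rw [h, orderOf_one] at hord
    omega
  have hχpow3 : χ₃ ^ 3 = 1 := by rw [← hord]; exact pow_orderOf_eq_one χ₃
  have hχ2ne1 : χ₃ ^ 2 ≠ 1 := by
    intro h
    have hd := orderOf_dvd_of_pow_eq_one h
    rw [hord] at hd
    omega
  have hχ2inv : χ₃ ^ 2 = χ₃⁻¹ := by
    apply eq_inv_of_mul_eq_one_left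
    rw [← pow_succ]; exact hχpow3
  have hm1 : χ₃ (-1 : F) = 1 := by
    have h2 : χ₃ (-1 : F) ^ 2 = 1 := by
      rw [← map_pow]; norm_num
    have h3' : χ₃ (-1 : F) ^ 3 = 1 := hx3 (-1) (neg_ne_zero.mpr one_ne_zero)
    linear_combination h3' - χ₃ (-1 : F) * h2
  have hsum1 : ∑ x : F, χ₃ x = 0 := MulChar.sum_eq_zero_of_ne_one hχne1
  have hsum2 : ∑ x : F, (χ₃ x) ^ 2 = 0 := by
    have h := MulChar.sum_eq_zero_of_ne_one hχ2ne1
    rw [← h]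
    exact Finset.sum_congr rfl fun x _ => (MulChar.pow_apply' χ₃ two_ne_zero x).symm
  -- Jacobi sum values
  have hJ12 : ∑ x : F, χ₃ x * (χ₃ (1 - x)) ^ 2 = -1 := by
    have h := jacobiSum_nontrivial_inv hχne1
    rw [hm1, ← hχ2inv] at h
    rw [← h]
    unfold jacobiSum
    exact Finset.sum_congr rfl fun x _ => by
      rw [MulChar.pow_apply' χ₃ two_ne_zero]
  have hJ21 : ∑ x : F, (χ₃ x) ^ 2 * χ₃ (1 - x) = -1 := by
    have h := jacobiSum_nontrivial_inv hχne1
    rw [hm1, ← hχ2inv, jacobiSum_comm] at h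
    rw [← h]
    unfold jacobiSum
    exact Finset.sum_congr rfl fun x _ => by
      rw [MulChar.pow_apply' χ₃ two_ne_zero]
  have hJ22 : ∑ x : F, (χ₃ x) ^ 2 * (χ₃ (1 - x)) ^ 2 = (starRingEnd ℂ) J := by
    rw [hJ, map_sum]
    exact Finset.sum_congr rfl fun x _ => by
      rw [map_mul, hconjx, hconjx]
  -- shift lemma
  have hshift : ∀ t s : ℕ, ∑ x : F, (χ₃ x) ^ t * (χ₃ (β - x)) ^ s
      = (χ₃ β) ^ (t + s) * ∑ x : F, (χ₃ x) ^ t * (χ₃ (1 - x)) ^ s := by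
    intro t s
    rw [Finset.mul_sum]
    refine (Fintype.sum_bijective (fun u => β * u) (mulLeft_bijective₀ β hβ) _ _ ?_).symm
    intro u
    have h1 : β - β * u = β * (1 - u) := by ring
    rw [h1, map_mul, map_mul, mul_pow, mul_pow, pow_add]
    ring
  -- the set S
  set S : Finset F := Finset.univ \ {0, β} with hS
  have hmemS : ∀ x : F, x ∈ S ↔ x ≠ 0 ∧ x ≠ β := by
    intro x
    simp [hS]
  have hsub : ({0, β} : Finset F) ⊆ Finset.univ := Finset.subset_univ _
  have h0β : (0 : F) ≠ β := fun h => hβ h.symm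
  -- reversal lemma
  have hrev : ∀ f : F → ℂ, ∑ x ∈ S, f (β - x) = ∑ x ∈ S, f x := by
    intro f
    refine Finset.sum_nbij' (fun x => β - x) (fun x => β - x) ?_ ?_ ?_ ?_ ?_
    · intro x hx
      rw [hmemS] at hx ⊢
      refine ⟨sub_ne_zero.mpr (Ne.symm hx.2), fun h => hx.1 ?_⟩
      linear_combination -h
    · intro x hx
      rw [hmemS] at hx ⊢
      refine ⟨sub_ne_zero.mpr (Ne.symm hx.2), fun h => hx.1 ?_⟩
      linear_combination -h
    · intro x _; ring
    · intro x _; ring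
    · intro x _; rfl
  -- sdiff sums
  have hsdiff : ∀ f : F → ℂ, ∑ x ∈ S, f x = (∑ x : F, f x) - f 0 - f β := by
    intro f
    rw [hS, Finset.sum_sdiff_eq_sub hsub, Finset.sum_pair h0β]
    ring
  -- T values
  have hT00 : ∑ x ∈ S, (χ₃ x) ^ 0 * (χ₃ (β - x)) ^ 0 = ((Fintype.card F : ℂ) - 2) := by
    simp only [pow_zero, mul_one]
    rw [hsdiff (fun _ => (1 : ℂ))]
    simp [Finset.card_univ]
    ring
  have hT10 : ∑ x ∈ S, (χ₃ x) ^ 1 * (χ₃ (β - x)) ^ 0 = -(χ₃ β) := by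
    simp only [pow_one, pow_zero, mul_one]
    rw [hsdiff (fun x => χ₃ x), hsum1, hχ0]
    ring
  have hT20 : ∑ x ∈ S, (χ₃ x) ^ 2 * (χ₃ (β - x)) ^ 0 = -(χ₃ β) ^ 2 := by
    simp only [pow_zero, mul_one]
    rw [hsdiff (fun x => (χ₃ x) ^ 2), hsum2, hχ0]
    ring
  have hT01 : ∑ x ∈ S, (χ₃ x) ^ 0 * (χ₃ (β - x)) ^ 1 = -(χ₃ β) := by
    simp only [pow_zero, pow_one, one_mul]
    rw [hrev (fun y => χ₃ y), hsdiff (fun x => χ₃ x), hsum1, hχ0]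
    ring
  have hT02 : ∑ x ∈ S, (χ₃ x) ^ 0 * (χ₃ (β - x)) ^ 2 = -(χ₃ β) ^ 2 := by
    simp only [pow_zero, one_mul]
    rw [hrev (fun y => (χ₃ y) ^ 2), hsdiff (fun x => (χ₃ x) ^ 2), hsum2, hχ0]
    ring
  -- extension from S to univ
  have hext : ∀ t s : ℕ, t ≠ 0 → s ≠ 0 →
      ∑ x ∈ S, (χ₃ x) ^ t * (χ₃ (β - x)) ^ s = ∑ x : F, (χ₃ x) ^ t * (χ₃ (β - x)) ^ s := by
    intro t s ht hs
    rw [hsdiff (fun x => (χ₃ x) ^ t * (χ₃ (β - x)) ^ s)]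
    have h0 : (χ₃ (0 : F)) ^ t = 0 := by rw [hχ0]; exact zero_pow ht
    have hb : (χ₃ (β - β)) ^ s = 0 := by rw [sub_self, hχ0]; exact zero_pow hs
    simp only [h0, hb, zero_mul, mul_zero]
    ring
  have hT11 : ∑ x ∈ S, (χ₃ x) ^ 1 * (χ₃ (β - x)) ^ 1 = (χ₃ β) ^ 2 * J := by
    rw [hext 1 1 one_ne_zero one_ne_zero, hshift 1 1, hJ]
    norm_num
  have hT12 : ∑ x ∈ S, (χ₃ x) ^ 1 * (χ₃ (β - x)) ^ 2 = -1 := by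
    rw [hext 1 2 one_ne_zero two_ne_zero, hshift 1 2, hx3 β hβ, one_mul]
    simp only [pow_one]
    exact hJ12
  have hT21 : ∑ x ∈ S, (χ₃ x) ^ 2 * (χ₃ (β - x)) ^ 1 = -1 := by
    rw [hext 2 1 two_ne_zero one_ne_zero, hshift 2 1, hx3 β hβ, one_mul]
    simp only [pow_one]
    exact hJ21
  have hT22 : ∑ x ∈ S, (χ₃ x) ^ 2 * (χ₃ (β - x)) ^ 2 = (χ₃ β) * (starRingEnd ℂ) J := by
    rw [hext 2 2 two_ne_zero two_ne_zero, hshift 2 2, hJ22]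
    have h4 : (χ₃ β) ^ (2 + 2) = χ₃ β := by
      have h3' := hx3 β hβ
      calc (χ₃ β) ^ (2 + 2) = (χ₃ β) ^ 3 * χ₃ β := by ring
      _ = χ₃ β := by rw [h3', one_mul]
    rw [h4]
  -- indicator lemma
  have hind : ∀ (k : Fin 3) (x : F), x ≠ 0 →
      (∑ t ∈ Finset.range 3, (χ₃ x) ^ t * ω ^ (2 * (k : ℕ) * t))
        = if χ₃ x = ω ^ (k : ℕ) then (3 : ℂ) else 0 := by
    intro k x hx
    obtain ⟨h, hh⟩ := hval x hx
    have hlt1 := h.isLt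
    have hlt2 := k.isLt
    have hhv : (h : ℕ) = 0 ∨ (h : ℕ) = 1 ∨ (h : ℕ) = 2 := by omega
    have hkv : (k : ℕ) = 0 ∨ (k : ℕ) = 1 ∨ (k : ℕ) = 2 := by omega
    rw [hh, Finset.sum_range_succ, Finset.sum_range_succ, Finset.sum_range_one]
    rcases hhv with h1 | h1 | h1 <;> rcases hkv with k1 | k1 | k1 <;> rw [h1, k1]
    · rw [if_pos rfl]; norm_num
    · rw [if_neg (fun hc => hω1 (show ω = 1 by simpa using hc.symm))]
      linear_combination hsumω + ω * hω3
    · rw [if_neg (fun hc => hω2 (show ω ^ 2 = 1 by simpa using hc.symm))]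
      linear_combination hsumω + (ω ^ 5 + ω ^ 2 + ω) * hω3
    · rw [if_neg (fun hc => hω1 (show ω = 1 by simpa using hc))]
      linear_combination hsumω
    · rw [if_pos rfl]
      linear_combination (ω ^ 3 + 2) * hω3
    · rw [if_neg (fun hc => hωω2 (show ω = ω ^ 2 by simpa using hc))]
      linear_combination hsumω + (ω ^ 7 + ω ^ 4 + ω ^ 2 + ω) * hω3
    · rw [if_neg (fun hc => hω2 (show ω ^ 2 = 1 by simpa using hc))]
      linear_combination hsumω + ω * hω3
    · rw [if_neg (fun hc => hωω2 (show ω = ω ^ 2 by simpa using hc.symm))]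
      linear_combination hsumω + (ω ^ 5 + ω ^ 2 + ω) * hω3
    · rw [if_pos rfl]
      linear_combination (ω ^ 9 + ω ^ 6 + 2 * ω ^ 3 + 2) * hω3
  -- counting
  have hcount : (Nat.card {p : F × F //
        χ₃ p.1 = ω ^ (j : ℕ) ∧ χ₃ p.2 = ω ^ (i : ℕ) ∧ p.1 + p.2 = β} : ℂ)
      = ∑ x ∈ S, (if χ₃ x = ω ^ (j : ℕ) ∧ χ₃ (β - x) = ω ^ (i : ℕ) then (1 : ℂ) else 0) := by
    have e : {p : F × F // χ₃ p.1 = ω ^ (j : ℕ) ∧ χ₃ p.2 = ω ^ (i : ℕ) ∧ p.1 + p.2 = β}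
        ≃ {x : F // χ₃ x = ω ^ (j : ℕ) ∧ χ₃ (β - x) = ω ^ (i : ℕ)} := by
      refine ⟨fun p => ⟨p.1.1, p.2.1, ?_⟩,
        fun x => ⟨(x.1, β - x.1), x.2.1, x.2.2, by ring⟩, ?_, ?_⟩
      · have hy : p.1.2 = β - p.1.1 := by linear_combination p.2.2.2
        rw [← hy]; exact p.2.2.1
      · intro p
        apply Subtype.ext
        have hy : β - p.1.1 = p.1.2 := by linear_combination -p.2.2.2
        exact Prod.ext rfl hy
      · intro x
        exact Subtype.ext rfl
    rw [Nat.card_congr e, Nat.card_eq_fintype_card, Fintype.card_subtype]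
    rw [← Finset.sum_boole (fun x : F => χ₃ x = ω ^ (j : ℕ) ∧ χ₃ (β - x) = ω ^ (i : ℕ))
      Finset.univ]
    refine (Finset.sum_subset (Finset.sdiff_subset) fun x _ hx => ?_).symm
    have hx' : x ∈ ({0, β} : Finset F) := by
      by_contra hxx
      exact hx (by rw [hmemS]; simpa using hxx)
    rw [Finset.mem_insert, Finset.mem_singleton] at hx'
    rcases hx' with h' | h' <;> rw [h']
    · rw [if_neg]
      intro hP
      exact pow_ne_zero _ hω0 (hχ0 ▸ hP.1).symm
    · rw [if_neg]
      intro hP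
      have : χ₃ (β - β) = 0 := by rw [sub_self, hχ0]
      exact pow_ne_zero _ hω0 (this ▸ hP.2).symm
  -- the expansion
  have hnine : (9 : ℂ) * (Nat.card {p : F × F //
        χ₃ p.1 = ω ^ (j : ℕ) ∧ χ₃ p.2 = ω ^ (i : ℕ) ∧ p.1 + p.2 = β} : ℂ)
      = ∑ t ∈ Finset.range 3, ∑ s ∈ Finset.range 3,
          ω ^ (2 * (j : ℕ) * t) * ω ^ (2 * (i : ℕ) * s)
            * ∑ x ∈ S, (χ₃ x) ^ t * (χ₃ (β - x)) ^ s := by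
    rw [hcount, Finset.mul_sum]
    have hpt : ∀ x ∈ S, (9 : ℂ) * (if χ₃ x = ω ^ (j : ℕ) ∧ χ₃ (β - x) = ω ^ (i : ℕ)
          then (1 : ℂ) else 0)
        = (∑ t ∈ Finset.range 3, (χ₃ x) ^ t * ω ^ (2 * (j : ℕ) * t))
          * (∑ s ∈ Finset.range 3, (χ₃ (β - x)) ^ s * ω ^ (2 * (i : ℕ) * s)) := by
      intro x hx
      rw [hmemS] at hx
      rw [hind j x hx.1, hind i (β - x) (sub_ne_zero.mpr (Ne.symm hx.2))]
      by_cases h1 : χ₃ x = ω ^ (j : ℕ) <;> by_cases h2 : χ₃ (β - x) = ω ^ (i : ℕ) <;>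
        simp [h1, h2] <;> norm_num
    rw [Finset.sum_congr rfl hpt]
    simp only [Finset.sum_mul_sum]
    rw [Finset.sum_comm]
    refine Finset.sum_congr rfl fun t _ => ?_
    rw [Finset.sum_comm]
    refine Finset.sum_congr rfl fun s _ => ?_
    rw [Finset.mul_sum]
    refine Finset.sum_congr rfl fun x _ => ?_
    ring
  -- conjugate of K
  have hKc : (starRingEnd ℂ) K = (χ₃ β) ^ 2 * (ω ^ (4 * (i : ℕ)) + ω ^ (4 * (j : ℕ)))
      + ω ^ (4 * (i : ℕ) + 2 * (j : ℕ))
      - ω ^ (4 * (i : ℕ) + 4 * (j : ℕ)) * (χ₃ β) * (starRingEnd ℂ) J := by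
    rw [hK]
    simp only [map_sub, map_add, map_mul, map_pow, hconj, hconjx, Complex.conj_conj]
    linear_combination (-(χ₃ β) * ω ^ (4 * (i : ℕ)) * ω ^ (4 * (j : ℕ)) * (starRingEnd ℂ) J)
      * hx3 β hβ
  -- final computation
  have hfin : (9 : ℂ) * (Nat.card {p : F × F //
        χ₃ p.1 = ω ^ (j : ℕ) ∧ χ₃ p.2 = ω ^ (i : ℕ) ∧ p.1 + p.2 = β} : ℂ)
      = (Fintype.card F : ℂ) - 2 - K - (starRingEnd ℂ) K := by
    rw [hnine]
    simp only [Finset.sum_range_succ, Finset.sum_range_zero]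
    rw [hT00, hT10, hT20, hT01, hT02, hT11, hT12, hT21, hT22]
    have hering : ω ^ (4 * (j : ℕ) + 2 * (i : ℕ)) = ω ^ (2 * (i : ℕ) + (j : ℕ)) := by
      rw [show 4 * (j : ℕ) + 2 * (i : ℕ) = (2 * (i : ℕ) + (j : ℕ)) + 3 * (j : ℕ) by ring,
        pow_add, pow_mul, hω3, one_pow, mul_one]
    linear_combination -hering + hK + hKc - ω ^ (2 * (j : ℕ)) * ω ^ (2 * (i : ℕ)) * J * hconjx β
  linear_combination hfin / 9
end

section
/- Let F be the finite field with 2^m elements, m even, and χ₃ a multiplicative character of order 3 on F. Then the Jacobi sum J(χ₃,χ₃) = Σ_{x∈F} χ₃(x)·χ₃(x+1) equals −(−2)^{m/2}. -/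
open Finset

theorem stmt_11 (F : Type*) [Field F] [Fintype F] (m : ℕ)
    (hcard : Fintype.card F = 2 ^ m) (hm : Even m) (hm0 : m ≠ 0)
    (χ₃ : MulChar F ℂ) (hord : orderOf χ₃ = 3) :
    ∑ x : F, χ₃ x * χ₃ (x + 1) = -(-2 : ℂ) ^ (m / 2) := by
  obtain ⟨k, hk⟩ := hm
  have hk0 : k ≠ 0 := by rintro rfl; exact hm0 (by omega)
  have hmk : m / 2 = k := by omega
  -- characteristic of F is 2
  have hprime : (ringChar F).Prime := CharP.char_is_prime F (ringChar F)
  haveI : Fact (ringChar F).Prime := ⟨hprime⟩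
  obtain ⟨n, -, hFn⟩ := FiniteField.card F (ringChar F)
  have hr2 : ringChar F = 2 := by
    have hdvd : ringChar F ∣ 2 ^ m := by
      rw [← hcard, hFn]; exact dvd_pow_self _ n.ne_zero
    have := hprime.dvd_of_dvd_pow hdvd
    exact (Nat.prime_dvd_prime_iff_eq hprime Nat.prime_two).mp this
  haveI hchar2 : CharP F 2 := hr2 ▸ ringChar.charP F
  haveI : Fact (Nat.Prime 2) := ⟨Nat.prime_two⟩
  -- basic facts about χ₃
  have hχ1 : χ₃ ≠ 1 := by
    intro h; rw [h, orderOf_one] at hord; norm_num at hord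
  have hχ3 : χ₃ ^ 3 = 1 := hord ▸ pow_orderOf_eq_one χ₃
  have hχ2 : χ₃ * χ₃ ≠ 1 := by
    intro h
    have : orderOf χ₃ ∣ 2 := orderOf_dvd_of_pow_eq_one (by rw [pow_two]; exact h)
    rw [hord] at this; norm_num at this
  have hinv : χ₃⁻¹ = χ₃ ^ 2 := by
    have : χ₃ ^ 2 * χ₃ = 1 := by rw [← pow_succ]; exact hχ3
    exact (eq_inv_of_mul_eq_one_left (by rw [mul_comm] at this ⊢; exact this)).symm
  -- the sum equals the Jacobi sum
  have hsum : ∑ x : F, χ₃ x * χ₃ (x + 1) = jacobiSum χ₃ χ₃ := by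
    unfold jacobiSum
    refine Finset.sum_congr rfl fun x _ ↦ ?_
    rw [sub_eq_add_neg, CharTwo.neg_eq, add_comm]
  rw [hsum, hmk]
  set J := jacobiSum χ₃ χ₃ with hJdef
  -- J(χ⁻¹, χ⁻¹) = J via Frobenius
  have hbij : Function.Bijective (frobenius F 2) :=
    (Finite.injective_iff_bijective).mp (frobenius F 2).injective
  have hJinv : jacobiSum χ₃⁻¹ χ₃⁻¹ = J := by
    rw [hJdef]
    unfold jacobiSum
    rw [← Function.Bijective.sum_comp hbij fun x => χ₃ x * χ₃ (1 - x)]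
    refine Finset.sum_congr rfl fun x _ ↦ ?_
    have h2 : ((1 : F) - x) ^ 2 = 1 - x ^ 2 := by
      have h := map_sub (frobenius F 2) 1 x
      simpa [frobenius_def] using h
    show χ₃⁻¹ x * χ₃⁻¹ (1 - x) = χ₃ (frobenius F 2 x) * χ₃ (1 - frobenius F 2 x)
    rw [show frobenius F 2 x = x ^ 2 from rfl, hinv, MulChar.pow_apply' χ₃ two_ne_zero,
      MulChar.pow_apply' χ₃ two_ne_zero, ← map_pow, ← map_pow, h2]
  -- J^2 = 2^m
  have hJsq : J * J = (2 : ℂ) ^ m := by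
    have h := jacobiSum_mul_jacobiSum_inv (F := F) (F' := ℂ)
      (by rw [hr2, ringChar.eq_zero]; norm_num) hχ1 hχ1 hχ2
    rw [hJinv] at h
    rw [h, hcard]; push_cast; ring
  -- primitive cube root of unity
  obtain ⟨μ, hμ⟩ : ∃ μ : ℂ, IsPrimitiveRoot μ 3 :=
    ⟨Complex.exp (2 * Real.pi * Complex.I / 3), Complex.isPrimitiveRoot_exp 3 (by norm_num)⟩
  have hμ3 : μ ^ 3 = 1 := hμ.pow_eq_one
  have hμ1 : μ ≠ 1 := hμ.ne_one (by norm_num)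
  have hquad : μ ^ 2 + μ + 1 = 0 := by
    have h : (μ - 1) * (μ ^ 2 + μ + 1) = 0 := by linear_combination hμ3
    rcases mul_eq_zero.mp h with h' | h'
    · exact absurd (sub_eq_zero.mp h') hμ1
    · exact h'
  have hsq : (μ - 1) ^ 2 = -3 * μ := by linear_combination hquad
  -- 3 ∣ card F - 1
  have hdvd3 : 3 ∣ Fintype.card F - 1 := by
    rw [hcard]
    have h4 : (2 : ℕ) ^ m = 4 ^ k := by
      rw [hk, ← two_mul, pow_mul]; norm_num
    rw [h4]
    have : (1 : ℕ) ≡ 4 ^ k [MOD 3] := by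
      calc (1 : ℕ) = 1 ^ k := (one_pow k).symm
      _ ≡ 4 ^ k [MOD 3] := Nat.ModEq.pow k (by decide)
    exact (Nat.modEq_iff_dvd' (Nat.one_le_iff_ne_zero.mpr (by positivity))).mp this
  obtain ⟨z, hz, hJmod⟩ := exists_jacobiSum_eq_neg_one_add (by norm_num : (2:ℕ) < 3)
    hχ3 hχ3 hdvd3 hμ
  rw [← hJdef] at hJmod
  -- case split on sign
  have hcases : J = -(-2 : ℂ) ^ k ∨ J = (-2 : ℂ) ^ k := by
    have h : (J - -(-2 : ℂ) ^ k) * (J - (-2 : ℂ) ^ k) = 0 := by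
      have h2 : ((-2 : ℂ) ^ k) * ((-2 : ℂ) ^ k) = 2 ^ m := by
        rw [← pow_add, ← hk, neg_pow, Even.neg_one_pow ⟨k, hk⟩, one_mul]
      linear_combination hJsq - h2
    rcases mul_eq_zero.mp h with h' | h'
    · exact Or.inl (sub_eq_zero.mp h')
    · exact Or.inr (sub_eq_zero.mp h')
  rcases hcases with h | h
  · exact h
  -- rule out the wrong sign
  exfalso
  obtain ⟨c, hc⟩ : ∃ c : ℤ, (-2 : ℤ) ^ k - 1 = 3 * c := by
    have : (-2 : ℤ) ^ k ≡ 1 ^ k [ZMOD 3] := Int.ModEq.pow k (by decide)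
    rw [one_pow] at this
    obtain ⟨c, hc⟩ := Int.ModEq.dvd this.symm
    exact ⟨c, by linarith⟩
  -- w := -(μ*z) - c is in ℤ[μ] and equals 2/3
  set w : ℂ := -(μ * z) - (c : ℂ) with hw
  have hwmem : w ∈ Algebra.adjoin ℤ ({μ} : Set ℂ) := by
    refine Subalgebra.sub_mem _ (Subalgebra.neg_mem _ (Subalgebra.mul_mem _ ?_ hz)) ?_
    · exact Algebra.self_mem_adjoin_singleton ℤ μ
    · exact Subalgebra.intCast_mem _ c
  have h3w : (3 : ℂ) * w = 2 := by
    have hcC : ((-2 : ℂ)) ^ k - 1 = 3 * (c : ℂ) := by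
      have := congrArg (Int.cast : ℤ → ℂ) hc
      push_cast at this
      exact this
    have hJ' : (-2 : ℂ) ^ k = -1 + z * (-3 * μ) := by rw [← h, hJmod, hsq]
    show (3 : ℂ) * (-(μ * z) - (c : ℂ)) = 2
    linear_combination hcC - hJ'
  have hint : IsIntegral ℤ w := by
    have hμint : IsIntegral ℤ μ := hμ.isIntegral (by norm_num)
    exact adjoin_le_integralClosure hμint hwmem
  have hw23 : w = ((2 / 3 : ℚ) : ℂ) := by
    push_cast
    rw [eq_div_iff (by norm_num : (3 : ℂ) ≠ 0)]
    linear_combination h3w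
  rw [hw23, ← eq_ratCast (algebraMap ℚ ℂ) (2/3)] at hint
  rw [isIntegral_algebraMap_iff (algebraMap ℚ ℂ).injective] at hint
  obtain ⟨y, hy⟩ := IsIntegrallyClosed.isIntegral_iff.mp hint
  have : (y : ℚ) = 2 / 3 := by exact_mod_cast hy
  have h3y : (3 : ℚ) * y = 2 := by rw [this]; ring
  have : (3 : ℤ) * y = 2 := by exact_mod_cast h3y
  omega
end

section
/- Let p be an odd prime. Every nonzero quadratic residue mod p can be written as an ordered sum of two nonzero quadratic residues in exactly (1/4)(p − 4 − χ₂(−1)) ways if we require both summands to be nonzero quadratic residues, where χ₂(−1) = (−1)^{(p−1)/2}; explicitly, this count is ⌊(p+1)/4⌋ − 1. -/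
open Finset

private lemma perron_key (p : ℕ) [hp : Fact p.Prime] (hp2 : p ≠ 2) :
    4 * (Nat.card {u : ZMod p //
        (u ≠ 0 ∧ IsSquare u) ∧ (1 - u ≠ 0 ∧ IsSquare (1 - u))} : ℤ) =
      (p : ℤ) - 4 - quadraticChar (ZMod p) (-1) := by
  classical
  have hchar : ringChar (ZMod p) ≠ 2 := by
    rw [ZMod.ringChar_zmod_n]; exact hp2
  let χ : MulChar (ZMod p) ℤ := quadraticChar (ZMod p)
  have hχ : χ = quadraticChar (ZMod p) := rfl
  have hz : χ (0 : ZMod p) = 0 := quadraticChar_zero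
  have ho : χ (1 : ZMod p) = 1 := map_one χ
  set f : ZMod p → ℤ := fun u =>
    if u = 0 ∨ u = 1 then 0 else (1 + χ u) * (1 + χ (1 - u)) with hf
  set g : ZMod p → ℤ := fun u => (1 + χ u) * (1 + χ (1 - u)) with hg
  -- pointwise identity
  have hpt : ∀ u : ZMod p,
      (4 : ℤ) * (if (u ≠ 0 ∧ IsSquare u) ∧ (1 - u ≠ 0 ∧ IsSquare (1 - u)) then 1 else 0)
        = f u := by
    intro u
    rcases eq_or_ne u 0 with rfl | hu0
    · simp [hf]
    rcases eq_or_ne u 1 with rfl | hu1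
    · simp [hf]
    have h1u : (1 : ZMod p) - u ≠ 0 := sub_ne_zero.mpr (Ne.symm hu1)
    have hfu : f u = (1 + χ u) * (1 + χ (1 - u)) := by
      simp [hf, hu0, hu1]
    rw [hfu]
    by_cases hs1 : IsSquare u
    · by_cases hs2 : IsSquare (1 - u)
      · rw [if_pos ⟨⟨hu0, hs1⟩, ⟨h1u, hs2⟩⟩, hχ,
          (quadraticChar_one_iff_isSquare hu0).mpr hs1,
          (quadraticChar_one_iff_isSquare h1u).mpr hs2]
        ring
      · rw [if_neg (by tauto), hχ, quadraticChar_neg_one_iff_not_isSquare.mpr hs2]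
        ring
    · rw [if_neg (by tauto), hχ, quadraticChar_neg_one_iff_not_isSquare.mpr hs1]
      ring
  -- card as a sum
  have hcard : (Nat.card {u : ZMod p //
      (u ≠ 0 ∧ IsSquare u) ∧ (1 - u ≠ 0 ∧ IsSquare (1 - u))} : ℤ)
      = ∑ u : ZMod p,
        (if (u ≠ 0 ∧ IsSquare u) ∧ (1 - u ≠ 0 ∧ IsSquare (1 - u)) then (1 : ℤ) else 0) := by
    rw [Nat.card_eq_fintype_card, Fintype.card_subtype]
    push_cast [Finset.card_filter]
    rfl
  have hsum4 : 4 * (Nat.card {u : ZMod p //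
      (u ≠ 0 ∧ IsSquare u) ∧ (1 - u ≠ 0 ∧ IsSquare (1 - u))} : ℤ) = ∑ u : ZMod p, f u := by
    rw [hcard, Finset.mul_sum]
    exact Finset.sum_congr rfl fun u _ => hpt u
  -- relate f-sum and g-sum
  have h01 : (0 : ZMod p) ≠ 1 := zero_ne_one
  have hdiff : ∑ u : ZMod p, (g u - f u) = 4 := by
    rw [Finset.sum_eq_add_of_mem (0 : ZMod p) 1 (mem_univ _) (mem_univ _) h01 ?_]
    · simp [hf, hg, hz, ho]
    · intro c _ hc
      simp [hf, hg, hc.1, hc.2]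
  have hgsum : ∑ u : ZMod p, g u = (p : ℤ) - χ (-1) := by
    have hexp : ∀ u : ZMod p, g u = 1 + χ u + χ (1 - u) + χ u * χ (1 - u) := by
      intro u; simp only [hg]; ring
    rw [Finset.sum_congr rfl fun u _ => hexp u]
    rw [Finset.sum_add_distrib, Finset.sum_add_distrib, Finset.sum_add_distrib]
    have h1 : ∑ _u : ZMod p, (1 : ℤ) = (p : ℤ) := by
      simp [Finset.card_univ, ZMod.card]
    have h2 : ∑ u : ZMod p, χ u = 0 := quadraticChar_sum_zero hchar
    have h3 : ∑ u : ZMod p, χ (1 - u) = 0 :=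
      (Fintype.sum_equiv (Equiv.subLeft (1 : ZMod p)) (fun u => χ (1 - u)) (fun v => χ v)
        fun u => rfl).trans (quadraticChar_sum_zero hchar)
    have h4 : ∑ u : ZMod p, χ u * χ (1 - u) = -χ (-1) := by
      have hinv : χ⁻¹ = χ := (quadraticChar_isQuadratic (ZMod p)).inv
      have hjs := jacobiSum_nontrivial_inv (F := ZMod p) (R := ℤ)
        (χ := χ) (by rw [hχ]; exact quadraticChar_ne_one hchar)
      rw [hinv] at hjs
      exact hjs
    rw [h1, h2, h3, h4]; ring
  have hfg : ∑ u : ZMod p, f u = (∑ u : ZMod p, g u) - ∑ u : ZMod p, (g u - f u) := by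
    rw [Finset.sum_sub_distrib]; ring
  rw [hsum4, hfg, hgsum, hdiff, hχ]; ring

theorem stmt_14 (p : ℕ) (hp : p.Prime) (hodd : Odd p)
    (β : ZMod p) (hβ : β ≠ 0) (hβsq : IsSquare β) :
    (Nat.card {q : ZMod p × ZMod p //
        (q.1 ≠ 0 ∧ IsSquare q.1) ∧ (q.2 ≠ 0 ∧ IsSquare q.2) ∧ q.1 + q.2 = β} : ℚ) =
      (1 / 4) * ((p : ℚ) - 4 - (-1) ^ ((p - 1) / 2)) ∧
    Nat.card {q : ZMod p × ZMod p //
        (q.1 ≠ 0 ∧ IsSquare q.1) ∧ (q.2 ≠ 0 ∧ IsSquare q.2) ∧ q.1 + q.2 = β} =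
      (p + 1) / 4 - 1 := by
  haveI : Fact p.Prime := ⟨hp⟩
  have hp2 : p ≠ 2 := by rintro rfl; exact (Nat.not_odd_iff_even.mpr even_two) hodd
  have hβinv : IsSquare (β⁻¹ : ZMod p) := by
    obtain ⟨b, rfl⟩ := hβsq
    exact ⟨b⁻¹, by rw [mul_inv]⟩
  have hsq_iff : ∀ x : ZMod p, IsSquare x → IsSquare (β⁻¹ * x) := fun x h => hβinv.mul h
  let e : {q : ZMod p × ZMod p //
      (q.1 ≠ 0 ∧ IsSquare q.1) ∧ (q.2 ≠ 0 ∧ IsSquare q.2) ∧ q.1 + q.2 = β} ≃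
      {u : ZMod p // (u ≠ 0 ∧ IsSquare u) ∧ (1 - u ≠ 0 ∧ IsSquare (1 - u))} :=
    { toFun := fun q => ⟨β⁻¹ * q.1.1, by
        obtain ⟨⟨h1, h2⟩, ⟨h3, h4⟩, h5⟩ := q.2
        have hq2 : q.1.2 = β - q.1.1 := eq_sub_of_add_eq' h5
        have hy : (1 : ZMod p) - β⁻¹ * q.1.1 = β⁻¹ * q.1.2 := by
          rw [hq2, mul_sub, inv_mul_cancel₀ hβ]
        refine ⟨⟨mul_ne_zero (inv_ne_zero hβ) h1, hsq_iff _ h2⟩, ?_, ?_⟩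
        · rw [hy]; exact mul_ne_zero (inv_ne_zero hβ) h3
        · rw [hy]; exact hsq_iff _ h4⟩
      invFun := fun u => ⟨(β * u.1, β * (1 - u.1)), by
        obtain ⟨⟨h1, h2⟩, ⟨h3, h4⟩⟩ := u.2
        exact ⟨⟨mul_ne_zero hβ h1, hβsq.mul h2⟩, ⟨mul_ne_zero hβ h3, hβsq.mul h4⟩, by ring⟩⟩
      left_inv := fun q => by
        obtain ⟨⟨q1, q2⟩, ⟨⟨h1, h2⟩, ⟨h3, h4⟩, h5⟩⟩ := q
        ext
        · show β * (β⁻¹ * q1) = q1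
          rw [mul_inv_cancel_left₀ hβ]
        · show β * (1 - β⁻¹ * q1) = q2
          rw [mul_sub, mul_one, mul_inv_cancel_left₀ hβ]
          exact (eq_sub_of_add_eq' h5).symm
      right_inv := fun u => by
        obtain ⟨u, hu⟩ := u
        ext
        show β⁻¹ * (β * u) = u
        rw [inv_mul_cancel_left₀ hβ] }
  have hcard : Nat.card {q : ZMod p × ZMod p //
      (q.1 ≠ 0 ∧ IsSquare q.1) ∧ (q.2 ≠ 0 ∧ IsSquare q.2) ∧ q.1 + q.2 = β}
      = Nat.card {u : ZMod p // (u ≠ 0 ∧ IsSquare u) ∧ (1 - u ≠ 0 ∧ IsSquare (1 - u))} :=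
    Nat.card_congr e
  have hkey : 4 * ((Nat.card {q : ZMod p × ZMod p //
      (q.1 ≠ 0 ∧ IsSquare q.1) ∧ (q.2 ≠ 0 ∧ IsSquare q.2) ∧ q.1 + q.2 = β} : ℤ)) =
      (p : ℤ) - 4 - quadraticChar (ZMod p) (-1) := by
    rw [hcard]; exact perron_key p hp2
  have hmod : p % 2 = 1 := Nat.odd_iff.mp hodd
  have hp5 : 5 ≤ p ∨ p = 3 := by
    have := hp.two_le; omega
  have hne0 : (-1 : ZMod p) ≠ 0 := neg_ne_zero.mpr one_ne_zero
  have h4 : p % 4 = 1 ∨ p % 4 = 3 := by omega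
  rcases h4 with h4 | h4
  · have hχ : quadraticChar (ZMod p) (-1) = 1 :=
      (quadraticChar_one_iff_isSquare hne0).mpr
        (ZMod.exists_sq_eq_neg_one_iff.mpr (by omega))
    rw [hχ] at hkey
    have heven : Even ((p - 1) / 2) := Nat.even_iff.mpr (by omega)
    have hpow : ((-1 : ℚ)) ^ ((p - 1) / 2) = 1 := heven.neg_one_pow
    constructor
    · rw [hpow]
      have h4N : 4 * ((Nat.card {q : ZMod p × ZMod p //
          (q.1 ≠ 0 ∧ IsSquare q.1) ∧ (q.2 ≠ 0 ∧ IsSquare q.2) ∧ q.1 + q.2 = β} : ℚ)) =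
          (p : ℚ) - 4 - 1 := by exact_mod_cast hkey
      linarith
    · omega
  · have hχ : quadraticChar (ZMod p) (-1) = -1 :=
      quadraticChar_neg_one_iff_not_isSquare.mpr
        (fun h => by have := ZMod.exists_sq_eq_neg_one_iff.mp h; omega)
    rw [hχ] at hkey
    have hoddexp : Odd ((p - 1) / 2) := Nat.odd_iff.mpr (by omega)
    have hpow : ((-1 : ℚ)) ^ ((p - 1) / 2) = -1 := hoddexp.neg_one_pow
    constructor
    · rw [hpow]
      have h4N : 4 * ((Nat.card {q : ZMod p × ZMod p //
          (q.1 ≠ 0 ∧ IsSquare q.1) ∧ (q.2 ≠ 0 ∧ IsSquare q.2) ∧ q.1 + q.2 = β} : ℚ)) =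
          (p : ℚ) - 4 - (-1) := by exact_mod_cast hkey
      linarith
    · omega
end

section
/- Let p be an odd prime and β a nonzero quadratic residue mod p. The number of ordered pairs (x, y) of quadratic non-residues mod p with x + y = β equals ⌊(p+1)/4⌋. -/
open Finset

/-- Key character sum: `∑ x, χ(x (x - β)) = -1` for the quadratic character and `β ≠ 0`. -/
lemma quad_sum_shift {p : ℕ} [Fact p.Prime] (hchar : ringChar (ZMod p) ≠ 2)
    {β : ZMod p} (hβ : β ≠ 0) :
    ∑ x : ZMod p, quadraticChar (ZMod p) (x * (x - β)) = -1 := by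
  classical
  set χ := quadraticChar (ZMod p) with hχ
  have h0 : ∑ x : ZMod p, χ (x * (x - β)) =
      ∑ x ∈ (univ : Finset (ZMod p)).erase 0, χ (x * (x - β)) := by
    rw [← Finset.sum_erase_add _ _ (mem_univ (0 : ZMod p))]
    simp [hχ, quadraticChar_zero]
  rw [h0]
  have h1 : ∀ x ∈ (univ : Finset (ZMod p)).erase 0,
      χ (x * (x - β)) = χ (1 - β * x⁻¹) := by
    intro x hx
    have hx0 : x ≠ 0 := (Finset.mem_erase.mp hx).1
    have : x * (x - β) = x ^ 2 * (1 - β * x⁻¹) := by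
      field_simp
    rw [this, map_mul, quadraticChar_sq_one' hx0, one_mul]
  rw [Finset.sum_congr rfl h1]
  have h2 : ∑ x ∈ (univ : Finset (ZMod p)).erase 0, χ (1 - β * x⁻¹) =
      ∑ y ∈ (univ : Finset (ZMod p)).erase 1, χ y := by
    apply Finset.sum_nbij' (fun x => 1 - β * x⁻¹) (fun y => β * (1 - y)⁻¹)
    · intro x hx
      have hx0 : x ≠ 0 := (Finset.mem_erase.mp hx).1
      simp only [Finset.mem_erase, Finset.mem_univ, and_true]
      intro h
      have : β * x⁻¹ = 0 := by linear_combination -h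
      rcases mul_eq_zero.mp this with h' | h'
      · exact hβ h'
      · exact hx0 (inv_eq_zero.mp h' )
    · intro y hy
      have hy1 : y ≠ 1 := (Finset.mem_erase.mp hy).1
      simp only [Finset.mem_erase, Finset.mem_univ, and_true]
      intro h
      rcases mul_eq_zero.mp h with h' | h'
      · exact hβ h'
      · exact hy1 (by
          have := inv_eq_zero.mp h'
          have : (1 : ZMod p) - y = 0 := this
          linear_combination -this)
    · intro x hx
      have hx0 : x ≠ 0 := (Finset.mem_erase.mp hx).1
      field_simp
      rw [sub_sub_cancel]; exact div_self hβ
    · intro y hy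
      have hy1 : y ≠ 1 := (Finset.mem_erase.mp hy).1
      have h1y : (1 : ZMod p) - y ≠ 0 := fun h => hy1 (by linear_combination -h)
      field_simp
      ring
    · intro x hx; rfl
  rw [h2]
  have h3 : ∑ y ∈ (univ : Finset (ZMod p)).erase 1, χ y + χ 1 = ∑ y : ZMod p, χ y :=
    Finset.sum_erase_add _ _ (mem_univ (1 : ZMod p))
  have h4 : ∑ y : ZMod p, χ y = 0 := quadraticChar_sum_zero hchar
  have h5 : χ (1 : ZMod p) = 1 := map_one _
  linarith [h3, h4, h5]

theorem stmt_15 (p : ℕ) (hp : p.Prime) (hodd : Odd p)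
    (β : ZMod p) (hβ : β ≠ 0) (hβsq : IsSquare β) :
    Nat.card {q : ZMod p × ZMod p //
        (q.1 ≠ 0 ∧ ¬ IsSquare q.1) ∧ (q.2 ≠ 0 ∧ ¬ IsSquare q.2) ∧ q.1 + q.2 = β} =
      (p + 1) / 4 := by
  classical
  haveI : Fact p.Prime := ⟨hp⟩
  have hp2 : p ≠ 2 := by rintro rfl; simp [Nat.odd_iff] at hodd
  have hchar : ringChar (ZMod p) ≠ 2 := by
    rw [ZMod.ringChar_zmod_n]; exact hp2
  set χ := quadraticChar (ZMod p) with hχ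
  set Q : ZMod p → Prop :=
    fun x => (x ≠ 0 ∧ ¬ IsSquare x) ∧ ((β - x) ≠ 0 ∧ ¬ IsSquare (β - x)) with hQ
  -- Step 1: reduce to counting x's
  have key : Nat.card {q : ZMod p × ZMod p //
      (q.1 ≠ 0 ∧ ¬ IsSquare q.1) ∧ (q.2 ≠ 0 ∧ ¬ IsSquare q.2) ∧ q.1 + q.2 = β} =
      ((univ : Finset (ZMod p)).filter Q).card := by
    rw [Nat.card_eq_fintype_card, ← Fintype.card_subtype]
    apply Fintype.card_congr
    refine ⟨fun q => ⟨q.1.1, ?_⟩, fun x => ⟨(x.1, β - x.1), ?_⟩, ?_, ?_⟩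
    · obtain ⟨h1, h2, h3⟩ := q.2
      have : β - q.1.1 = q.1.2 := by linear_combination -h3
      exact ⟨h1, this ▸ h2⟩
    · obtain ⟨h1, h2⟩ := x.2
      exact ⟨h1, h2, by ring⟩
    · rintro ⟨⟨a, b⟩, h1, h2, h3⟩
      have hab : β - a = b := by linear_combination -h3
      exact Subtype.ext (Prod.ext rfl hab)
    · rintro ⟨x, hx⟩; rfl
  rw [key]
  -- Step 2: indicator identity
  have hind : ∀ x : ZMod p,
      (1 - χ x) * (1 - χ (β - x)) = if Q x then 4 else 0 := by
    intro x
    by_cases hx0 : x = 0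
    · subst hx0
      have : χ (β - 0) = 1 := by
        rw [sub_zero]; exact (quadraticChar_one_iff_isSquare hβ).mpr hβsq
      rw [this]
      have hQ0 : ¬ Q 0 := fun h => h.1.1 rfl
      rw [if_neg hQ0]
      ring
    by_cases hx1 : β - x = 0
    · have hxβ : x = β := by linear_combination -hx1
      have hQx : ¬ Q x := fun h => h.2.1 hx1
      rw [show χ x = 1 from hxβ ▸ ((quadraticChar_one_iff_isSquare hβ).mpr hβsq),
        if_neg hQx]
      simp [hx1]
    rcases quadraticChar_dichotomy hx0 with ha | ha <;>
      rcases quadraticChar_dichotomy hx1 with hb | hb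
    · have : ¬ Q x := fun h => h.1.2 ((quadraticChar_one_iff_isSquare hx0).mp ha)
      rw [ha, hb, if_neg this]; norm_num
    · have : ¬ Q x := fun h => h.1.2 ((quadraticChar_one_iff_isSquare hx0).mp ha)
      rw [ha, hb, if_neg this]; norm_num
    · have : ¬ Q x := fun h => h.2.2 ((quadraticChar_one_iff_isSquare hx1).mp hb)
      rw [ha, hb, if_neg this]; norm_num
    · have : Q x := ⟨⟨hx0, quadraticChar_neg_one_iff_not_isSquare.mp ha⟩,
        ⟨hx1, quadraticChar_neg_one_iff_not_isSquare.mp hb⟩⟩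
      rw [ha, hb, if_pos this]; norm_num
  -- Step 3: evaluate the full sum
  have hsum1 : ∑ x : ZMod p, χ x = 0 := quadraticChar_sum_zero hchar
  have hsum2 : ∑ x : ZMod p, χ (β - x) = 0 := by
    rw [Fintype.sum_equiv (Equiv.subLeft β) (fun x => χ (β - x)) χ (fun x => rfl)]
    exact hsum1
  have hsum3 : ∑ x : ZMod p, χ x * χ (β - x) = - χ (-1) := by
    have e1 : ∀ x : ZMod p, χ x * χ (β - x) = χ (-1) * χ (x * (x - β)) := by
      intro x
      rw [← map_mul, ← map_mul]
      congr 1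
      ring
    rw [Finset.sum_congr rfl (fun x _ => e1 x), ← Finset.mul_sum,
      quad_sum_shift hchar hβ]
    ring
  have hcardF : (Fintype.card (ZMod p) : ℤ) = p := by rw [ZMod.card]
  have hexpand : ∑ x : ZMod p, (1 - χ x) * (1 - χ (β - x)) = (p : ℤ) - χ (-1) := by
    have : ∀ x : ZMod p, (1 - χ x) * (1 - χ (β - x)) =
        1 - χ x - χ (β - x) + χ x * χ (β - x) := fun x => by ring
    rw [Finset.sum_congr rfl (fun x _ => this x)]
    simp only [Finset.sum_add_distrib, Finset.sum_sub_distrib, hsum1, hsum2, hsum3,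
      Finset.sum_const, card_univ, nsmul_eq_mul, mul_one]
    rw [hcardF]
    ring
  have hfour : (4 : ℤ) * ((univ : Finset (ZMod p)).filter Q).card = (p : ℤ) - χ (-1) := by
    rw [← hexpand, Finset.sum_congr rfl (fun x _ => hind x), Finset.sum_ite,
      Finset.sum_const, Finset.sum_const_zero, add_zero, nsmul_eq_mul]
    ring
  set N := ((univ : Finset (ZMod p)).filter Q).card with hN
  have hp5 : p % 4 = 1 ∨ p % 4 = 3 := by
    have h2 := hp.two_le
    have h3 := Nat.odd_iff.mp hodd
    omega
  have hm1 : (-1 : ZMod p) ≠ 0 := neg_ne_zero.mpr one_ne_zero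
  rcases hp5 with h4 | h4
  · have hsq : IsSquare (-1 : ZMod p) := ZMod.exists_sq_eq_neg_one_iff.mpr (by omega)
    have hχ1 : χ (-1) = 1 := (quadraticChar_one_iff_isSquare hm1).mpr hsq
    rw [hχ1] at hfour
    omega
  · have hsq : ¬ IsSquare (-1 : ZMod p) := fun h =>
      (ZMod.exists_sq_eq_neg_one_iff.mp h) h4
    have hχ1 : χ (-1) = -1 := quadraticChar_neg_one_iff_not_isSquare.mpr hsq
    rw [hχ1] at hfour
    omega
end

section
/- Let F_q be a finite field, χ a nontrivial multiplicative character of order n, ω a fixed primitive n-th root of unity in ℂ, and x_j a nonzero element of F_q. For i ∈ {0,...,n−1}, let σ_i be the number of x ∈ F_q with χ(x)·conj(χ(x + x_j)) = ω^i. Then σ_0 + 1 = σ_1 = σ_2 = ⋯ = σ_{n−1} = (q−1)/n. -/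
open Finset

theorem stmt_16 (F : Type*) [Field F] [Fintype F] (n : ℕ) (hn : 1 < n)
    (χ : MulChar F ℂ) (hord : orderOf χ = n)
    (ω : ℂ) (hω : IsPrimitiveRoot ω n)
    (xj : F) (hxj : xj ≠ 0)
    (σ : ℕ → ℕ)
    (hσ : ∀ i, σ i = Nat.card {x : F // χ x * (starRingEnd ℂ) (χ (x + xj)) = ω ^ i}) :
    σ 0 + 1 = (Fintype.card F - 1) / n ∧
    ∀ i, 0 < i → i < n → σ i = (Fintype.card F - 1) / n := by
  classical
  obtain ⟨g, hg⟩ := IsCyclic.exists_generator (α := Fˣ)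
  have hn0 : n ≠ 0 := by omega
  haveI : NeZero n := ⟨hn0⟩
  have hconj : ∀ a : F, (starRingEnd ℂ) (χ a) = (χ a)⁻¹ := fun a => by
    rw [starRingEnd_apply, MulChar.star_apply', MulChar.inv_apply_eq_inv']
  have hinv : ∀ a : F, χ a⁻¹ = (χ a)⁻¹ := fun a => by
    rw [← MulChar.inv_apply', MulChar.inv_apply_eq_inv']
  have hne : ∀ y : F, y ≠ 0 → χ y ≠ 0 := by
    intro y hy h0
    have h1 : χ y * χ y⁻¹ = 1 := by
      rw [← map_mul, mul_inv_cancel₀ hy, MulChar.map_one]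
    rw [h0, zero_mul] at h1
    exact zero_ne_one h1
  have hgen : ∀ y : F, y ≠ 0 → ∃ m : ℕ, y = (g : F) ^ m := by
    intro y hy
    obtain ⟨m, hm⟩ := mem_powers_iff_mem_zpowers.mpr (hg (Units.mk0 y hy))
    refine ⟨m, ?_⟩
    have := congrArg Units.val hm
    simpa using this.symm
  set ζ : ℂ := χ (g : F) with hζdef
  have hzpow : ∀ m : ℕ, (χ ^ m = 1) ↔ ζ ^ m = 1 := by
    intro m
    rw [MulChar.eq_iff hg, MulChar.pow_apply_coe, MulChar.one_apply_coe]
  have hζord : orderOf ζ = n := by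
    rw [← hord]
    exact orderOf_eq_orderOf_iff.mpr fun m => (hzpow m).symm
  have hζ : IsPrimitiveRoot ζ n := hζord ▸ IsPrimitiveRoot.orderOf ζ
  set K := (univ.filter fun y : F => y ≠ 0 ∧ χ y = 1).card with hK
  have la : ∀ (c : ℂ) (y₀ : F), y₀ ≠ 0 → χ y₀ = c →
      (univ.filter fun y : F => y ≠ 0 ∧ χ y = c).card = K := by
    intro c y₀ hy₀ hχy₀
    have hc0 : c ≠ 0 := hχy₀ ▸ hne y₀ hy₀
    apply Finset.card_bij' (i := fun y _ => y₀⁻¹ * y) (j := fun y _ => y₀ * y)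
    · intro a ha
      simp only [mem_filter, mem_univ, true_and] at ha ⊢
      refine ⟨mul_ne_zero (inv_ne_zero hy₀) ha.1, ?_⟩
      rw [map_mul, hinv, hχy₀, ha.2, inv_mul_cancel₀ hc0]
    · intro a ha
      simp only [mem_filter, mem_univ, true_and] at ha ⊢
      refine ⟨mul_ne_zero hy₀ ha.1, ?_⟩
      rw [map_mul, hχy₀, ha.2, mul_one]
    · intro a _; field_simp
    · intro a _; field_simp
  have hcards : (univ.filter fun y : F => y ≠ 0).card = Fintype.card F - 1 := by
    rw [Finset.filter_ne' univ 0, Finset.card_erase_of_mem (mem_univ 0), card_univ]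
  have hunion : (univ.filter fun y : F => y ≠ 0) =
      (Finset.range n).biUnion (fun j => univ.filter fun y : F => y ≠ 0 ∧ χ y = ζ ^ j) := by
    ext y
    simp only [mem_filter, mem_univ, true_and, mem_biUnion, mem_range]
    constructor
    · intro hy
      obtain ⟨m, rfl⟩ := hgen y hy
      refine ⟨m % n, Nat.mod_lt _ (Nat.pos_of_ne_zero hn0), hy, ?_⟩
      rw [map_pow]
      conv_lhs => rw [← Nat.div_add_mod m n]
      rw [pow_add, pow_mul, hζ.pow_eq_one, one_pow, one_mul]
    · rintro ⟨j, _, hy, _⟩; exact hy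
  have hdisj : ∀ a ∈ Finset.range n, ∀ b ∈ Finset.range n, a ≠ b →
      Disjoint (univ.filter fun y : F => y ≠ 0 ∧ χ y = ζ ^ a)
        (univ.filter fun y : F => y ≠ 0 ∧ χ y = ζ ^ b) := by
    intro a ha b hb hab
    simp only [mem_range] at ha hb
    refine Finset.disjoint_left.mpr ?_
    intro y hy hy'
    simp only [mem_filter, mem_univ, true_and] at hy hy'
    exact hab (hζ.pow_inj ha hb (hy.2.symm.trans hy'.2))
  have lb : Fintype.card F - 1 = n * K := by
    rw [← hcards, hunion, Finset.card_biUnion hdisj]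
    rw [Finset.sum_congr rfl fun j _ =>
      la (ζ ^ j) ((g : F) ^ j) (pow_ne_zero _ g.ne_zero) (map_pow χ _ _)]
    rw [Finset.sum_const, Finset.card_range, smul_eq_mul]
  have hKq : (Fintype.card F - 1) / n = K := by
    rw [lb, Nat.mul_div_cancel_left _ (Nat.pos_of_ne_zero hn0)]
  obtain ⟨k, -, hk⟩ := hζ.eq_pow_of_pow_eq_one hω.pow_eq_one
  have hwit : ∀ i : ℕ, χ ((g : F) ^ (k * i)) = ω ^ i := by
    intro i
    rw [map_pow, pow_mul, hk]
  -- key: count σ i via a bijection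
  have hσ' : ∀ i : ℕ, σ i = (univ.filter fun y : F => y ≠ 0 ∧ y ≠ 1 ∧ χ y = ω ^ i).card := by
    intro i
    have hω0 : (ω : ℂ) ^ i ≠ 0 := pow_ne_zero _ (hω.ne_zero hn0)
    rw [hσ i, Nat.card_eq_fintype_card, Fintype.card_subtype]
    have hstep : (univ.filter fun x : F => χ x * (starRingEnd ℂ) (χ (x + xj)) = ω ^ i)
        = univ.filter fun x : F => χ (x * (x + xj)⁻¹) = ω ^ i := by
      apply Finset.filter_congr
      intro x _
      rw [hconj, map_mul, hinv]
    rw [hstep]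
    have key0 : ∀ x : F, χ (x * (x + xj)⁻¹) = ω ^ i → x ≠ 0 ∧ x + xj ≠ 0 := by
      intro x hx
      have hprod : x * (x + xj)⁻¹ ≠ 0 := by
        intro h
        rw [h, MulChar.map_zero] at hx
        exact hω0 hx.symm
      refine ⟨left_ne_zero_of_mul hprod, fun h => ?_⟩
      rw [h, inv_zero, mul_zero] at hprod
      exact hprod rfl
    apply Finset.card_bij' (i := fun x _ => x * (x + xj)⁻¹)
      (j := fun y _ => y * xj * (1 - y)⁻¹)
    · intro a ha
      simp only [mem_filter, mem_univ, true_and] at ha ⊢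
      obtain ⟨ha0, haj⟩ := key0 a ha
      refine ⟨mul_ne_zero ha0 (inv_ne_zero haj), ?_, ha⟩
      intro h1
      have h2 : a * (a + xj)⁻¹ * (a + xj) = 1 * (a + xj) := by rw [h1]
      rw [one_mul, mul_assoc, inv_mul_cancel₀ haj, mul_one] at h2
      exact hxj (left_eq_add.mp h2)
    · intro y hy
      simp only [mem_filter, mem_univ, true_and] at hy ⊢
      obtain ⟨hy0, hy1, hyχ⟩ := hy
      have h1y : (1 : F) - y ≠ 0 := sub_ne_zero_of_ne (Ne.symm hy1)
      have hsum : y * xj * (1 - y)⁻¹ + xj = xj * (1 - y)⁻¹ := by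
        field_simp
        ring
      rw [hsum]
      have : y * xj * (1 - y)⁻¹ * (xj * (1 - y)⁻¹)⁻¹ = y := by
        field_simp
      rw [this, hyχ]
    · intro a ha
      simp only [mem_filter, mem_univ, true_and] at ha
      obtain ⟨ha0, haj⟩ := key0 a ha
      have h1 : 1 - a * (a + xj)⁻¹ = xj * (a + xj)⁻¹ := by
        field_simp
        ring
      rw [h1]
      field_simp
    · intro y hy
      simp only [mem_filter, mem_univ, true_and] at hy
      obtain ⟨hy0, hy1, _⟩ := hy
      have h1y : (1 : F) - y ≠ 0 := sub_ne_zero_of_ne (Ne.symm hy1)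
      have hsum : y * xj * (1 - y)⁻¹ + xj = xj * (1 - y)⁻¹ := by
        field_simp
        ring
      rw [hsum]
      field_simp
  constructor
  · have hB : (univ.filter fun y : F => y ≠ 0 ∧ y ≠ 1 ∧ χ y = ω ^ 0)
        = (univ.filter fun y : F => y ≠ 0 ∧ χ y = 1).erase 1 := by
      ext y
      simp only [pow_zero, mem_filter, mem_univ, true_and, mem_erase]
      tauto
    have h1mem : (1 : F) ∈ univ.filter fun y : F => y ≠ 0 ∧ χ y = 1 := by
      simp only [mem_filter, mem_univ, true_and]
      exact ⟨one_ne_zero, MulChar.map_one χ⟩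
    have hKpos : 0 < K := hK ▸ Finset.card_pos.mpr ⟨1, h1mem⟩
    rw [hσ' 0, hB, Finset.card_erase_of_mem h1mem, ← hK, hKq]
    omega
  · intro i hi0 hin
    have hωi1 : ω ^ i ≠ 1 := hω.pow_ne_one_of_pos_of_lt hi0.ne' hin
    have hfil : (univ.filter fun y : F => y ≠ 0 ∧ y ≠ 1 ∧ χ y = ω ^ i)
        = univ.filter fun y : F => y ≠ 0 ∧ χ y = ω ^ i := by
      apply Finset.filter_congr
      intro y _
      constructor
      · rintro ⟨h0, _, hc⟩; exact ⟨h0, hc⟩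
      · rintro ⟨h0, hc⟩
        refine ⟨h0, ?_, hc⟩
        rintro rfl
        rw [MulChar.map_one] at hc
        exact hωi1 hc.symm
    rw [hσ' i, hfil, la (ω ^ i) ((g : F) ^ (k * i)) (pow_ne_zero _ g.ne_zero) (hwit i), hKq]
end

section
/- Let F_q be a finite field with q ≡ 1 mod 3 and A₀, A₁, A₂ the cosets of the nonzero cubes. For β ≠ 0, the sum over the three pairs (i,j) ∈ {(0,1),(1,2),(2,0)} of the number of ordered pairs (x,y), x ∈ A_i, y ∈ A_j, x + y = β, equals (q−1)/3. -/
theorem stmt_18 (F : Type*) [Field F] [Fintype F]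
    (h3 : 3 ∣ Fintype.card F - 1)
    (α : F) (hα : ∀ x : F, x ≠ 0 → ∃ n : ℕ, α ^ n = x)
    (β : F) (hβ : β ≠ 0)
    (A : Fin 3 → F → Prop)
    (hA : ∀ k x, A k x ↔ ∃ n : ℕ, α ^ ((k : ℕ) + 3 * n) = x) :
    (Nat.card {p : F × F // A 0 p.1 ∧ A 1 p.2 ∧ p.1 + p.2 = β} : ℚ) +
    (Nat.card {p : F × F // A 1 p.1 ∧ A 2 p.2 ∧ p.1 + p.2 = β} : ℚ) +
    (Nat.card {p : F × F // A 2 p.1 ∧ A 0 p.2 ∧ p.1 + p.2 = β} : ℚ) =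
      ((Fintype.card F : ℚ) - 1) / 3 := by
  classical
  have hq1 : 1 < Fintype.card F := Fintype.one_lt_card
  have hq4 : 4 ≤ Fintype.card F := by omega
  -- α ≠ 0
  have hα0 : α ≠ 0 := by
    rintro rfl
    have hall : ∀ x : F, x = 0 ∨ x = 1 := by
      intro x
      by_cases hx : x = 0
      · exact Or.inl hx
      · obtain ⟨n, hn⟩ := hα x hx
        rcases Nat.eq_zero_or_pos n with h | h
        · right; rw [h, pow_zero] at hn; exact hn.symm
        · exfalso; rw [zero_pow h.ne'] at hn; exact hx hn.symm
    have hsub : (Finset.univ : Finset F) ⊆ {0, 1} := by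
      intro x _
      rcases hall x with h | h <;> simp [h]
    have hc : Fintype.card F ≤ 2 := by
      calc Fintype.card F = (Finset.univ : Finset F).card := rfl
        _ ≤ ({0, 1} : Finset F).card := Finset.card_le_card hsub
        _ ≤ 2 := Finset.card_insert_le 0 {1}
    omega
  set u : Fˣ := Units.mk0 α hα0 with hu_def
  have huc : (u : F) = α := rfl
  have hu : ∀ v : Fˣ, v ∈ Subgroup.zpowers u := by
    intro v
    obtain ⟨n, hn⟩ := hα (v : F) v.ne_zero
    have hv : u ^ n = v := Units.ext (by rw [Units.val_pow_eq_pow_val, huc]; exact hn)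
    exact ⟨(n : ℤ), by simpa [zpow_natCast] using hv⟩
  have hord : orderOf u = Fintype.card F - 1 := by
    rw [← Fintype.card_units, ← Nat.card_eq_fintype_card]
    exact orderOf_eq_card_of_forall_mem_zpowers hu
  have hdvd3 : 3 ∣ orderOf u := hord ▸ h3
  -- exponent classes
  have hexp : ∀ m n : ℕ, α ^ m = α ^ n → ((m : ZMod 3) = n) := by
    intro m n h
    have hum : u ^ m = u ^ n := Units.ext (by
      rw [Units.val_pow_eq_pow_val, Units.val_pow_eq_pow_val, huc]; exact h)
    rw [pow_eq_pow_iff_modEq] at hum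
    exact (ZMod.natCast_eq_natCast_iff _ _ _).mpr (hum.of_dvd hdvd3)
  set ind : F → ZMod 3 :=
    fun x => if h : x = 0 then 0 else ((Classical.choose (hα x h) : ℕ) : ZMod 3) with hind_def
  have hind : ∀ (x : F) (h : x ≠ 0) (n : ℕ), α ^ n = x → (n : ZMod 3) = ind x := by
    intro x h n hn
    have hc := Classical.choose_spec (hα x h)
    simp only [hind_def, dif_neg h]
    exact hexp n _ (hn.trans hc.symm)
  have hAne : ∀ (k : Fin 3) (x : F), A k x → x ≠ 0 := by
    intro k x hx
    obtain ⟨n, hn⟩ := (hA k x).mp hx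
    rw [← hn]; exact pow_ne_zero _ hα0
  have hAiff : ∀ (k : Fin 3) (x : F), x ≠ 0 → (A k x ↔ ind x = ((k : ℕ) : ZMod 3)) := by
    intro k x hx
    constructor
    · intro hk
      obtain ⟨n, hn⟩ := (hA k x).mp hk
      rw [← hind x hx _ hn]
      push_cast
      rw [show (3 : ZMod 3) = 0 by decide]
      ring
    · intro hk
      obtain ⟨n, hn⟩ := hα x hx
      have h1 : (n : ZMod 3) = ((k : ℕ) : ZMod 3) := (hind x hx n hn).trans hk
      have h2 : n % 3 = (k : ℕ) % 3 := (ZMod.natCast_eq_natCast_iff _ _ _).mp h1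
      have hklt := k.isLt
      refine (hA k x).mpr ⟨n / 3, ?_⟩
      rw [← hn]; congr 1; omega
  have hmul : ∀ x y : F, x ≠ 0 → y ≠ 0 → ind (x * y) = ind x + ind y := by
    intro x y hx hy
    obtain ⟨m, hm⟩ := hα x hx
    obtain ⟨n, hn⟩ := hα y hy
    have hxy : α ^ (m + n) = x * y := by rw [pow_add, hm, hn]
    rw [← hind _ (mul_ne_zero hx hy) _ hxy, ← hind x hx m hm, ← hind y hy n hn]
    push_cast; ring
  have hselfα : ind α = 1 := by
    have := hind α hα0 1 (pow_one α)
    simpa using this.symm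
  have hneg1 : ind (-1 : F) = 0 := by
    have hne : (-1 : F) ≠ 0 := by simp
    obtain ⟨m, hm⟩ := hα (-1) hne
    have hm3 : α ^ (m * 3) = -1 := by rw [pow_mul, hm]; ring
    rw [← hind (-1) hne _ hm3]
    push_cast
    rw [show (3 : ZMod 3) = 0 by decide]
    ring
  -- disjointness
  have hfin : ∀ j k : Fin 3, ((j : ℕ) : ZMod 3) = ((k : ℕ) : ZMod 3) → j = k := by decide
  have hdisA : ∀ (j k : Fin 3) (x : F), j ≠ k → A j x → A k x → False := by
    intro j k x hjk hj hk
    have hx := hAne _ _ hj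
    have h1 := (hAiff j x hx).mp hj
    have h2 := (hAiff k x hx).mp hk
    exact hjk (hfin j k (h1.symm.trans h2))
  -- characterization of the union predicate
  have hQiff : ∀ x y : F,
      ((A 0 x ∧ A 1 y) ∨ (A 1 x ∧ A 2 y) ∨ (A 2 x ∧ A 0 y)) ↔
        (x ≠ 0 ∧ y ≠ 0 ∧ ind y = ind x + 1) := by
    intro x y
    constructor
    · rintro (⟨h1, h2⟩ | ⟨h1, h2⟩ | ⟨h1, h2⟩) <;>
      · have hx := hAne _ _ h1
        have hy := hAne _ _ h2
        refine ⟨hx, hy, ?_⟩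
        rw [(hAiff _ _ hx).mp h1, (hAiff _ _ hy).mp h2]
        decide
    · rintro ⟨hx, hy, h⟩
      have htri : ∀ a : ZMod 3, a = 0 ∨ a = 1 ∨ a = 2 := by decide
      rcases htri (ind x) with h0 | h0 | h0
      · refine Or.inl ⟨(hAiff 0 x hx).mpr (by rw [h0]; decide),
          (hAiff 1 y hy).mpr (by rw [h, h0]; decide)⟩
      · refine Or.inr (Or.inl ⟨(hAiff 1 x hx).mpr (by rw [h0]; decide),
          (hAiff 2 y hy).mpr (by rw [h, h0]; decide)⟩)
      · refine Or.inr (Or.inr ⟨(hAiff 2 x hx).mpr (by rw [h0]; decide),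
          (hAiff 0 y hy).mpr (by rw [h, h0]; decide)⟩)
  -- the union count
  have hunion : (Finset.univ.filter (fun p : F × F => A 0 p.1 ∧ A 1 p.2 ∧ p.1 + p.2 = β)).card +
      (Finset.univ.filter (fun p : F × F => A 1 p.1 ∧ A 2 p.2 ∧ p.1 + p.2 = β)).card +
      (Finset.univ.filter (fun p : F × F => A 2 p.1 ∧ A 0 p.2 ∧ p.1 + p.2 = β)).card =
      (Finset.univ.filter (fun p : F × F =>
        p.1 ≠ 0 ∧ p.2 ≠ 0 ∧ ind p.2 = ind p.1 + 1 ∧ p.1 + p.2 = β)).card := by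
    have h01 : Disjoint
        (Finset.univ.filter (fun p : F × F => A 0 p.1 ∧ A 1 p.2 ∧ p.1 + p.2 = β))
        (Finset.univ.filter (fun p : F × F => A 1 p.1 ∧ A 2 p.2 ∧ p.1 + p.2 = β)) := by
      rw [Finset.disjoint_filter]
      rintro p _ ⟨ha, _, _⟩ ⟨hb, _, _⟩
      exact hdisA 0 1 p.1 (by decide) ha hb
    have h012 : Disjoint
        (Finset.univ.filter (fun p : F × F => A 0 p.1 ∧ A 1 p.2 ∧ p.1 + p.2 = β) ∪
         Finset.univ.filter (fun p : F × F => A 1 p.1 ∧ A 2 p.2 ∧ p.1 + p.2 = β))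
        (Finset.univ.filter (fun p : F × F => A 2 p.1 ∧ A 0 p.2 ∧ p.1 + p.2 = β)) := by
      rw [Finset.disjoint_union_left]
      constructor <;> rw [Finset.disjoint_filter]
      · rintro p _ ⟨ha, _, _⟩ ⟨hb, _, _⟩
        exact hdisA 0 2 p.1 (by decide) ha hb
      · rintro p _ ⟨ha, _, _⟩ ⟨hb, _, _⟩
        exact hdisA 1 2 p.1 (by decide) ha hb
    rw [← Finset.card_union_of_disjoint h01, ← Finset.card_union_of_disjoint h012]
    congr 1
    ext p
    simp only [Finset.mem_union, Finset.mem_filter, Finset.mem_univ, true_and]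
    constructor
    · rintro ((⟨ha, hb, hc⟩ | ⟨ha, hb, hc⟩) | ⟨ha, hb, hc⟩)
      all_goals
        obtain ⟨hx, hy, hi⟩ := (hQiff p.1 p.2).mp (by tauto)
        exact ⟨hx, hy, hi, hc⟩
    · rintro ⟨hx, hy, hi, hsum⟩
      rcases (hQiff p.1 p.2).mpr ⟨hx, hy, hi⟩ with h | h | h
      · exact Or.inl (Or.inl ⟨h.1, h.2, hsum⟩)
      · exact Or.inl (Or.inr ⟨h.1, h.2, hsum⟩)
      · exact Or.inr ⟨h.1, h.2, hsum⟩
  -- bijection between Q-pairs and A 1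
  have hbij : (Finset.univ.filter (fun p : F × F =>
        p.1 ≠ 0 ∧ p.2 ≠ 0 ∧ ind p.2 = ind p.1 + 1 ∧ p.1 + p.2 = β)).card =
      (Finset.univ.filter (A 1)).card := by
    refine Finset.card_nbij' (fun p => p.2 * p.1⁻¹)
      (fun t => (β * (1 + t)⁻¹, β * t * (1 + t)⁻¹)) ?_ ?_ ?_ ?_
    · rintro ⟨x, y⟩ hp
      simp only [Finset.mem_coe, Finset.mem_filter, Finset.mem_univ, true_and] at hp ⊢
      obtain ⟨hx, hy, hi, hsum⟩ := hp
      have hne : y * x⁻¹ ≠ 0 := mul_ne_zero hy (inv_ne_zero hx)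
      refine (hAiff 1 _ hne).mpr ?_
      have h1 : x * (y * x⁻¹) = y := by field_simp
      have h2 := hmul x (y * x⁻¹) hx hne
      rw [h1] at h2
      have h4 : ind x + ind (y * x⁻¹) = ind x + 1 := h2.symm.trans hi
      rw [add_left_cancel h4]
      decide
    · intro t ht
      simp only [Finset.mem_coe, Finset.mem_filter, Finset.mem_univ, true_and] at ht ⊢
      have htne : t ≠ 0 := hAne _ _ ht
      have hit : ind t = 1 := by
        rw [(hAiff 1 t htne).mp ht]; decide
      have h1t : (1 : F) + t ≠ 0 := by
        intro h
        have ht1 : t = -1 := by linear_combination h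
        rw [ht1, hneg1] at hit
        exact one_ne_zero hit.symm
      have hxne : β * (1 + t)⁻¹ ≠ 0 := mul_ne_zero hβ (inv_ne_zero h1t)
      have hyne : β * t * (1 + t)⁻¹ ≠ 0 :=
        mul_ne_zero (mul_ne_zero hβ htne) (inv_ne_zero h1t)
      refine ⟨hxne, hyne, ?_, ?_⟩
      · have heq : β * t * (1 + t)⁻¹ = (β * (1 + t)⁻¹) * t := by ring
        rw [heq, hmul _ t hxne htne, hit]
      · field_simp
    · rintro ⟨x, y⟩ hp
      simp only [Finset.mem_coe, Finset.mem_filter, Finset.mem_univ, true_and] at hp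
      obtain ⟨hx, hy, hi, hsum⟩ := hp
      have hres : (1 : F) + y * x⁻¹ = β * x⁻¹ := by
        field_simp
        linear_combination hsum
      have hβx : β * x⁻¹ ≠ 0 := mul_ne_zero hβ (inv_ne_zero hx)
      have hfst : β * (1 + y * x⁻¹)⁻¹ = x := by
        rw [hres, mul_inv, inv_inv]
        field_simp
      have hsnd : β * (y * x⁻¹) * (1 + y * x⁻¹)⁻¹ = y := by
        rw [hres, mul_inv, inv_inv]
        field_simp
      exact Prod.ext hfst hsnd
    · intro t ht
      simp only [Finset.mem_coe, Finset.mem_filter, Finset.mem_univ, true_and] at ht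
      have htne : t ≠ 0 := hAne _ _ ht
      have hit : ind t = 1 := by
        rw [(hAiff 1 t htne).mp ht]; decide
      have h1t : (1 : F) + t ≠ 0 := by
        intro h
        have ht1 : t = -1 := by linear_combination h
        rw [ht1, hneg1] at hit
        exact one_ne_zero hit.symm
      show β * t * (1 + t)⁻¹ * (β * (1 + t)⁻¹)⁻¹ = t
      field_simp
  -- sizes of the cosets are equal
  have himg : ∀ k k' : Fin 3, ((k' : ℕ) : ZMod 3) = ((k : ℕ) : ZMod 3) + 1 →
      (Finset.univ.filter (A k)).card = (Finset.univ.filter (A k')).card := by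
    intro k k' hkk'
    refine Finset.card_nbij' (fun t => α * t) (fun t => α⁻¹ * t) ?_ ?_ ?_ ?_
    · intro t ht
      simp only [Finset.mem_coe, Finset.mem_filter, Finset.mem_univ, true_and] at ht ⊢
      have htne : t ≠ 0 := hAne _ _ ht
      refine (hAiff k' _ (mul_ne_zero hα0 htne)).mpr ?_
      rw [hmul α t hα0 htne, hselfα, (hAiff k t htne).mp ht, hkk']
      ring
    · intro t ht
      simp only [Finset.mem_coe, Finset.mem_filter, Finset.mem_univ, true_and] at ht ⊢
      have htne : t ≠ 0 := hAne _ _ ht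
      have hαi : (α⁻¹ : F) ≠ 0 := inv_ne_zero hα0
      refine (hAiff k _ (mul_ne_zero hαi htne)).mpr ?_
      have h1 : α * (α⁻¹ * t) = t := by field_simp
      have h2 := hmul α (α⁻¹ * t) hα0 (mul_ne_zero hαi htne)
      rw [h1, (hAiff k' t htne).mp ht, hselfα, hkk'] at h2
      have h4 : (1 : ZMod 3) + ind (α⁻¹ * t) = 1 + ((k : ℕ) : ZMod 3) := by
        rw [← h2]; ring
      exact add_left_cancel h4
    · intro t _; field_simp
    · intro t _; field_simp
  have h01c : (Finset.univ.filter (A 0)).card = (Finset.univ.filter (A 1)).card :=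
    himg 0 1 (by decide)
  have h12c : (Finset.univ.filter (A 1)).card = (Finset.univ.filter (A 2)).card :=
    himg 1 2 (by decide)
  -- partition of nonzero elements
  have hpart : (Finset.univ.filter (A 0)).card + (Finset.univ.filter (A 1)).card +
      (Finset.univ.filter (A 2)).card = Fintype.card F - 1 := by
    have d01 : Disjoint (Finset.univ.filter (A 0)) (Finset.univ.filter (A 1)) := by
      rw [Finset.disjoint_filter]
      intro x _ h1 h2
      exact hdisA 0 1 x (by decide) h1 h2
    have d012 : Disjoint (Finset.univ.filter (A 0) ∪ Finset.univ.filter (A 1))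
        (Finset.univ.filter (A 2)) := by
      rw [Finset.disjoint_union_left]
      constructor <;> rw [Finset.disjoint_filter] <;> intro x _ h1 h2
      · exact hdisA 0 2 x (by decide) h1 h2
      · exact hdisA 1 2 x (by decide) h1 h2
    rw [← Finset.card_union_of_disjoint d01, ← Finset.card_union_of_disjoint d012]
    have he : Finset.univ.filter (A 0) ∪ Finset.univ.filter (A 1) ∪ Finset.univ.filter (A 2)
        = Finset.univ.filter (fun x : F => x ≠ 0) := by
      ext x
      simp only [Finset.mem_union, Finset.mem_filter, Finset.mem_univ, true_and]
      constructor
      · rintro ((h | h) | h) <;> exact hAne _ _ h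
      · intro hx
        have htri : ∀ a : ZMod 3, a = 0 ∨ a = 1 ∨ a = 2 := by decide
        rcases htri (ind x) with h0 | h0 | h0
        · exact Or.inl (Or.inl ((hAiff 0 x hx).mpr (by rw [h0]; decide)))
        · exact Or.inl (Or.inr ((hAiff 1 x hx).mpr (by rw [h0]; decide)))
        · exact Or.inr ((hAiff 2 x hx).mpr (by rw [h0]; decide))
    rw [he]
    have he2 : Finset.univ.filter (fun x : F => x ≠ 0) = Finset.univ.erase 0 := by
      ext x; simp [Finset.mem_erase, and_comm]
    rw [he2, Finset.card_erase_of_mem (Finset.mem_univ 0), Finset.card_univ]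
  have hN : 3 * (Finset.univ.filter (A 1)).card = Fintype.card F - 1 := by omega
  -- convert Nat.card to filter cards
  have e0 : Nat.card {p : F × F // A 0 p.1 ∧ A 1 p.2 ∧ p.1 + p.2 = β} =
      (Finset.univ.filter (fun p : F × F => A 0 p.1 ∧ A 1 p.2 ∧ p.1 + p.2 = β)).card := by
    rw [Nat.card_eq_fintype_card]; exact Fintype.card_subtype _
  have e1 : Nat.card {p : F × F // A 1 p.1 ∧ A 2 p.2 ∧ p.1 + p.2 = β} =
      (Finset.univ.filter (fun p : F × F => A 1 p.1 ∧ A 2 p.2 ∧ p.1 + p.2 = β)).card := by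
    rw [Nat.card_eq_fintype_card]; exact Fintype.card_subtype _
  have e2 : Nat.card {p : F × F // A 2 p.1 ∧ A 0 p.2 ∧ p.1 + p.2 = β} =
      (Finset.univ.filter (fun p : F × F => A 2 p.1 ∧ A 0 p.2 ∧ p.1 + p.2 = β)).card := by
    rw [Nat.card_eq_fintype_card]; exact Fintype.card_subtype _
  have key : (Finset.univ.filter (fun p : F × F => A 0 p.1 ∧ A 1 p.2 ∧ p.1 + p.2 = β)).card +
      (Finset.univ.filter (fun p : F × F => A 1 p.1 ∧ A 2 p.2 ∧ p.1 + p.2 = β)).card +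
      (Finset.univ.filter (fun p : F × F => A 2 p.1 ∧ A 0 p.2 ∧ p.1 + p.2 = β)).card =
      (Finset.univ.filter (A 1)).card := hunion.trans hbij
  have hkeyQ := congrArg (fun n : ℕ => (n : ℚ)) key
  push_cast at hkeyQ
  have hNQ : (3 : ℚ) * ((Finset.univ.filter (A 1)).card : ℚ) = (Fintype.card F : ℚ) - 1 := by
    have h1 := congrArg (fun n : ℕ => (n : ℚ)) hN
    simp only [Nat.cast_mul, Nat.cast_ofNat] at h1
    rw [Nat.cast_sub hq1.le, Nat.cast_one] at h1
    exact h1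
  rw [e0, e1, e2]
  linarith [hkeyQ, hNQ]
end
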